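/- For the monic skew orthogonal polynomials p_{2n}(z) = z^{2n}, p_{2n+1}(z) = z^{2n+1} − 2n z^{2n−1} of the real Ginibre ensemble (τ = 0 case), the summation kernel S_0^c(w,z) := Σ_{j=1}^{N} p_{j-1}(w) q_{j-1}(z) / u_{⌊(j-1)/2⌋}, with q_{2j-2} = −p_{2j-1}, q_{2j-1} = p_{2j-2}, and u_n = (2n)! · 2√(2π), simplifies to S_0^c(w,z) = ((w − z)/(2√(2π))) Σ_{j=0}^{N-2} (wz)^j / j! for even N. -/

import Mathlib

open Complex

/-- The monic skew orthogonal polynomials of the real Ginibre ensemble: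
  `p_{2n}(z) = z^{2n}`, `p_{2n+1}(z) = z^{2n+1} - 2n z^{2n-1}`. -/
noncomputable def p (n : ℕ) (z : ℂ) : ℂ :=
  if n % 2 = 0 then z ^ n else z ^ n - ((n : ℂ) - 1) * z ^ (n - 2)

/-- `q_{2j-2} = -p_{2j-1}`, `q_{2j-1} = p_{2j-2}`. -/
noncomputable def q (n : ℕ) (z : ℂ) : ℂ :=
  if n % 2 = 0 then -p (n + 1) z else p (n - 1) z

/-- The normalizations `u_n = (2n)! · 2√(2π)`. -/
noncomputable def u (n : ℕ) : ℝ :=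
  ((2 * n).factorial : ℝ) * 2 * Real.sqrt (2 * Real.pi)

/-- The summation kernel `S_0^c(w,z) = Σ_{j=1}^N p_{j-1}(w) q_{j-1}(z) / u_{⌊(j-1)/2⌋}`. -/
noncomputable def S0c (N : ℕ) (w z : ℂ) : ℂ :=
  ∑ j ∈ Finset.range N, p j w * q j z / (u (j / 2) : ℂ)

lemma s_ne : (Real.sqrt (2 * Real.pi) : ℂ) ≠ 0 := by
  exact_mod_cast (Real.sqrt_pos.mpr (by positivity)).ne'

lemma p_even (k : ℕ) (w : ℂ) : p (2 * k) w = w ^ (2 * k) := by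
  simp [p, Nat.mul_mod_right]

lemma p_odd (k : ℕ) (w : ℂ) :
    p (2 * k + 1) w = w ^ (2 * k + 1) - (2 * k : ℂ) * w ^ (2 * k - 1) := by
  rw [p, if_neg (by omega)]
  have h1 : 2 * k + 1 - 2 = 2 * k - 1 := by omega
  rw [h1]
  push_cast
  ring_nf

lemma q_even (k : ℕ) (z : ℂ) : q (2 * k) z = -p (2 * k + 1) z := by
  rw [q, if_pos (by omega)]

lemma q_odd (k : ℕ) (z : ℂ) : q (2 * k + 1) z = p (2 * k) z := by
  rw [q, if_neg (by omega)]
  norm_num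

lemma u_cast (n : ℕ) : (u n : ℂ) = ((2 * n).factorial : ℂ) * 2 * (Real.sqrt (2 * Real.pi) : ℂ) := by
  simp [u]

lemma key (w z : ℂ) : ∀ m : ℕ, S0c (2 * (m + 1)) w z =
    (w - z) / (2 * (Real.sqrt (2 * Real.pi) : ℂ)) *
      ∑ j ∈ Finset.range (2 * m + 1), (w * z) ^ j / (j.factorial : ℂ) := by
  intro m
  induction m with
  | zero =>
      simp only [S0c, show 2 * (0 + 1) = 2 from rfl, Finset.sum_range_succ,
        Finset.sum_range_zero, Finset.sum_range_one]
      have h0 : p 0 w = 1 := by simpa using p_even 0 w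
      have h1 : q 0 z = -z := by
        rw [q_even 0]
        simpa using p_odd 0 z
      have h2 : p 1 w = w := by simpa using p_odd 0 w
      have h3 : q 1 z = 1 := by
        rw [show (1:ℕ) = 2*0+1 from rfl, q_odd 0]
        simpa using p_even 0 z
      rw [h0, h1, h2, h3]
      simp only [Nat.zero_div, u_cast, Nat.mul_zero, Nat.factorial_zero]
      push_cast
      field_simp [s_ne]
      ring
  | succ m ih =>
      have e1 : 2 * (m + 1 + 1) = (2 * m + 2) + 1 + 1 := by ring
      have e2 : 2 * (m + 1) + 1 = (2 * m + 1) + 1 + 1 := by ring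
      have peel1 : (∑ x ∈ Finset.range ((2*m+1) + 1 + 1), (w * z) ^ x / (x.factorial : ℂ))
          = (∑ x ∈ Finset.range ((2*m+1) + 1), (w * z) ^ x / (x.factorial : ℂ))
            + (w * z) ^ ((2*m+1) + 1) / (((2*m+1) + 1).factorial : ℂ) :=
        Finset.sum_range_succ _ _
      have peel2 : (∑ x ∈ Finset.range ((2*m+1) + 1), (w * z) ^ x / (x.factorial : ℂ))
          = (∑ x ∈ Finset.range (2*m+1), (w * z) ^ x / (x.factorial : ℂ))
            + (w * z) ^ (2*m+1) / ((2*m+1).factorial : ℂ) :=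
        Finset.sum_range_succ _ _
      rw [S0c, e1, Finset.sum_range_succ (n := 2*m+2+1), Finset.sum_range_succ (n := 2*m+2),
        show 2 * (m + 1) + 1 = (2*m+1) + 1 + 1 from by ring, peel1, peel2]
      have hS : (∑ j ∈ Finset.range (2 * m + 2), p j w * q j z / (u (j / 2) : ℂ))
          = S0c (2 * (m + 1)) w z := by
        rw [S0c, show 2 * (m + 1) = 2 * m + 2 from by ring]
      rw [hS, ih]
      have d1 : (2 * m + 2) / 2 = m + 1 := by omega
      have d2 : (2 * m + 2 + 1) / 2 = m + 1 := by omega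
      have hpe : p (2 * m + 2) w = w ^ (2 * m + 2) := by
        simpa [show 2 * (m+1) = 2*m+2 from by ring] using p_even (m+1) w
      have hqe : q (2 * m + 2) z = -(z ^ (2 * m + 3) - (2 * (m:ℂ) + 2) * z ^ (2 * m + 1)) := by
        have := q_even (m+1) z
        rw [show 2 * (m+1) = 2*m+2 from by ring] at this
        rw [this, show 2*m+2+1 = 2*(m+1)+1 from by ring, p_odd]
        have : 2 * (m + 1) - 1 = 2 * m + 1 := by omega
        rw [this]
        push_cast
        ring_nf
      have hpo : p (2 * m + 2 + 1) w = w ^ (2 * m + 3) - (2 * (m:ℂ) + 2) * w ^ (2 * m + 1) := by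
        rw [show 2*m+2+1 = 2*(m+1)+1 from by ring, p_odd]
        have : 2 * (m + 1) - 1 = 2 * m + 1 := by omega
        rw [this]
        push_cast
        ring_nf
      have hqo : q (2 * m + 2 + 1) z = z ^ (2 * m + 2) := by
        rw [show 2*m+2+1 = 2*(m+1)+1 from by ring, q_odd, p_even,
          show 2 * (m+1) = 2*m+2 from by ring]
      have hs2 : ((Real.sqrt 2 : ℝ) : ℂ) ≠ 0 := by
        exact_mod_cast (Real.sqrt_pos.mpr (by norm_num)).ne'
      have hspi : ((Real.sqrt Real.pi : ℝ) : ℂ) ≠ 0 := by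
        exact_mod_cast (Real.sqrt_pos.mpr Real.pi_pos).ne'
      have hf1 : ((2 * m + 1).factorial : ℂ) ≠ 0 := by
        exact_mod_cast (Nat.factorial_pos _).ne'
      have h2m2 : ((2:ℂ) * m + 2) ≠ 0 := by
        have h' : ((2 * m + 2 : ℕ) : ℂ) ≠ 0 := Nat.cast_ne_zero.mpr (by omega)
        push_cast at h'
        exact h'
      have hfac2 : ((2 * m + 1 + 1).factorial : ℂ) = (2 * (m:ℂ) + 2) * ((2 * m + 1).factorial : ℂ) := by
        rw [Nat.factorial_succ]
        push_cast
        ring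
      have hpair : w ^ (2*m+2) * (-(z ^ (2*m+3) - (2*(m:ℂ)+2) * z ^ (2*m+1))) / ((u (m+1) : ℝ) : ℂ)
          + (w ^ (2*m+3) - (2*(m:ℂ)+2) * w ^ (2*m+1)) * z ^ (2*m+2) / ((u (m+1) : ℝ) : ℂ)
          = (w - z) / (2 * (Real.sqrt (2 * Real.pi) : ℂ)) *
            ((w*z)^(2*m+1) / ((2*m+1).factorial : ℂ)
              + (w*z)^(2*m+1+1) / ((2*m+1+1).factorial : ℂ)) := by
        rw [u_cast, hfac2, show (2 * (m+1)).factorial = (2*m+1+1).factorial from by norm_num [Nat.mul_add], hfac2]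
        field_simp [s_ne, hs2, hspi, hf1, h2m2]
        ring
      rw [d1, d2, hpe, hqe, hpo, hqo]
      linear_combination hpair

/-- for even `N`, the kernel simplifies to
  `S_0^c(w,z) = ((w-z)/(2√(2π))) Σ_{j=0}^{N-2} (wz)^j / j!`. -/
theorem S0c_simplification (N : ℕ) (hN : Even N) (hNpos : 0 < N) (w z : ℂ) :
    S0c N w z =
      (w - z) / (2 * (Real.sqrt (2 * Real.pi) : ℂ)) *
        ∑ j ∈ Finset.range (N - 1), (w * z) ^ j / (j.factorial : ℂ) := by
  obtain ⟨k, hk⟩ := hN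
  have hk1 : 1 ≤ k := by omega
  rw [show N = 2 * ((k - 1) + 1) from by omega]
  rw [show 2 * ((k - 1) + 1) - 1 = 2 * (k - 1) + 1 from by omega]
  exact key w z (k - 1)
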